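/- Let k be a symmetric positive-semidefinite kernel on ℝ^d, let x^(1),…,x^(N) (N ≥ 1) be training inputs and σ_n² > 0 a noise variance. Then for every x ∈ ℝ^d the Gaussian process posterior variance satisfies σ_N²(x) ≤ k(x,x) − ( N · min_{1≤i≤N} k(x^(i),x)² ) / ( N · max_{1≤i,j≤N} k(x^(i),x^(j)) + σ_n² ). -/

import Mathlib

open Matrix

lemma symm_dot {n : ℕ} {A : Matrix (Fin n) (Fin n) ℝ} (hA : Aᵀ = A)
    (u v : Fin n → ℝ) : v ⬝ᵥ A *ᵥ u = u ⬝ᵥ A *ᵥ v := by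
  rw [Matrix.dotProduct_mulVec, ← Matrix.mulVec_transpose, hA, dotProduct_comm]

/-- Cauchy–Schwarz for a PSD matrix. -/
lemma cs_psd {n : ℕ} {A : Matrix (Fin n) (Fin n) ℝ} (hA : A.PosSemidef)
    (u v : Fin n → ℝ) :
    (u ⬝ᵥ A *ᵥ v) ^ 2 ≤ (u ⬝ᵥ A *ᵥ u) * (v ⬝ᵥ A *ᵥ v) := by
  have hsym : Aᵀ = A := hA.1
  have key : discrim (u ⬝ᵥ A *ᵥ u) (2 * (u ⬝ᵥ A *ᵥ v)) (v ⬝ᵥ A *ᵥ v) ≤ 0 := by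
    apply discrim_le_zero
    intro t
    have h := hA.dotProduct_mulVec_nonneg (t • u + v)
    simp only [star_trivial] at h
    have hexp : (t • u + v) ⬝ᵥ A *ᵥ (t • u + v)
        = (u ⬝ᵥ A *ᵥ u) * (t * t) + 2 * (u ⬝ᵥ A *ᵥ v) * t + v ⬝ᵥ A *ᵥ v := by
      have hvu : v ⬝ᵥ A *ᵥ u = u ⬝ᵥ A *ᵥ v := symm_dot hsym u v
      simp only [Matrix.mulVec_add, Matrix.mulVec_smul, dotProduct_add,
        add_dotProduct, dotProduct_smul, smul_dotProduct, smul_eq_mul, hvu]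
      ring
    rw [hexp] at h
    linarith
  rw [discrim] at key
  nlinarith [key]

/-- Intermediate posterior variance bound via min/max kernel values. -/
theorem gp_posterior_variance_bound_minmax
    (d N : ℕ) (hN : 1 ≤ N)
    (X : Fin N → EuclideanSpace ℝ (Fin d))
    (σn2 : ℝ) (hσ : 0 < σn2)
    (k : EuclideanSpace ℝ (Fin d) → EuclideanSpace ℝ (Fin d) → ℝ)
    (hsymm : ∀ x y, k x y = k y x)
    (hpsd : ∀ (m : ℕ) (z : Fin m → EuclideanSpace ℝ (Fin d)),
      (Matrix.of fun i j => k (z i) (z j)).PosSemidef)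
    (x : EuclideanSpace ℝ (Fin d)) :
    letI K : Matrix (Fin N) (Fin N) ℝ := Matrix.of fun i j => k (X i) (X j)
    letI kN : Fin N → ℝ := fun i => k x (X i)
    letI σ2 : ℝ := k x x - kN ⬝ᵥ ((K + σn2 • (1 : Matrix (Fin N) (Fin N) ℝ))⁻¹ *ᵥ kN)
    σ2 ≤ k x x - (N * (⨅ i, k (X i) x ^ 2)) / (N * (⨆ i, ⨆ j, k (X i) (X j)) + σn2) := by
  set K : Matrix (Fin N) (Fin N) ℝ := Matrix.of fun i j => k (X i) (X j) with hKdef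
  set kN : Fin N → ℝ := fun i => k x (X i) with hkNdef
  haveI hne : Nonempty (Fin N) := ⟨⟨0, hN⟩⟩
  have hK : K.PosSemidef := hpsd N X
  set A : Matrix (Fin N) (Fin N) ℝ := K + σn2 • (1 : Matrix (Fin N) (Fin N) ℝ) with hAdef
  -- A is positive definite
  have hA : A.PosDef := by
    refine Matrix.PosDef.of_dotProduct_mulVec_pos ?_ ?_
    · show Aᵀ = A
      have h1 : Kᵀ = K := hK.1
      have h2 : (σn2 • (1 : Matrix (Fin N) (Fin N) ℝ))ᵀ = σn2 • 1 := by
        rw [Matrix.transpose_smul, Matrix.transpose_one]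
      rw [hAdef, Matrix.transpose_add, h1, h2]
    · intro y hy
      have h1 : 0 ≤ y ⬝ᵥ K *ᵥ y := by simpa using hK.dotProduct_mulVec_nonneg y
      have h2 : 0 < y ⬝ᵥ y := by
        have hnn : 0 ≤ y ⬝ᵥ y := by
          simp only [dotProduct]
          exact Finset.sum_nonneg fun i _ => mul_self_nonneg _
        have hne0 : y ⬝ᵥ y ≠ 0 := fun h => hy (dotProduct_self_eq_zero.mp h)
        exact lt_of_le_of_ne hnn (Ne.symm hne0)
      have hexp : y ⬝ᵥ A *ᵥ y = y ⬝ᵥ K *ᵥ y + σn2 * (y ⬝ᵥ y) := by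
        simp only [hAdef, Matrix.add_mulVec, Matrix.smul_mulVec, Matrix.one_mulVec,
          dotProduct_add, dotProduct_smul, smul_eq_mul]
      simp only [star_trivial, hexp]
      nlinarith
  have hAinv : A⁻¹.PosDef := hA.inv
  set S : ℝ := kN ⬝ᵥ (A⁻¹ *ᵥ kN) with hSdef
  have hS0 : 0 ≤ S := by simpa using hAinv.posSemidef.dotProduct_mulVec_nonneg kN
  -- the sign vector
  set v : Fin N → ℝ := fun i => if kN i < 0 then (-1 : ℝ) else 1 with hvdef
  have hvk : ∀ i, v i * kN i = |kN i| := by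
    intro i
    by_cases h : kN i < 0
    · simp [hvdef, h, abs_of_neg h]
    · simp [hvdef, h, abs_of_nonneg (not_lt.mp h)]
  have hvsq : ∀ i, v i * v i = 1 := by
    intro i; by_cases h : kN i < 0 <;> simp [hvdef, h]
  -- min and max quantities
  set m : ℝ := ⨅ i, k (X i) x ^ 2 with hmdef
  set M : ℝ := ⨆ i, ⨆ j, k (X i) (X j) with hMdef
  have hm_le : ∀ i, m ≤ k (X i) x ^ 2 := fun i =>
    ciInf_le (Set.Finite.bddBelow (Set.finite_range _)) i
  have hm0 : 0 ≤ m := le_ciInf fun i => sq_nonneg _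
  have hM_ge : ∀ i j, k (X i) (X j) ≤ M := by
    intro i j
    have h1 : k (X i) (X j) ≤ ⨆ j', k (X i) (X j') :=
      le_ciSup (f := fun j' => k (X i) (X j'))
        (Set.Finite.bddAbove (Set.finite_range _)) j
    exact h1.trans (le_ciSup (f := fun i' => ⨆ j', k (X i') (X j'))
        (Set.Finite.bddAbove (Set.finite_range _)) i)
  -- |K i j| ≤ M via PSD on single-vector combinations
  have hdiag : ∀ i, 0 ≤ K i i := by
    intro i
    have := hK.dotProduct_mulVec_nonneg (Pi.single i 1)
    simpa [Matrix.mulVec_single, single_dotProduct] using this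
  have hKneg : ∀ i j, -(K i j) ≤ M := by
    intro i j
    have h := hK.dotProduct_mulVec_nonneg (Pi.single i 1 + Pi.single j 1)
    have hexp : (Pi.single i 1 + Pi.single j 1) ⬝ᵥ K *ᵥ (Pi.single i 1 + Pi.single j 1)
        = K i i + K i j + K j i + K j j := by
      simp only [Matrix.mulVec_add, Matrix.mulVec_single, dotProduct_add, add_dotProduct,
        single_dotProduct]
      simp; ring
    rw [star_trivial, hexp] at h
    have hij : K j i = K i j := hsymm (X j) (X i)
    have hKM : ∀ a, K a a ≤ M := fun a => hM_ge a a
    nlinarith [hKM i, hKM j]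
  have hvKv : ∀ i j, v i * (K i j * v j) ≤ M := by
    intro i j
    have hvv : v i * v j = 1 ∨ v i * v j = -1 := by
      by_cases h1 : kN i < 0 <;> by_cases h2 : kN j < 0 <;> simp [hvdef, h1, h2]
    have hKij : K i j ≤ M := hM_ge i j
    rcases hvv with h | h <;> nlinarith [hKneg i j]
  -- bound on v ⬝ᵥ A *ᵥ v
  have hvAv : v ⬝ᵥ A *ᵥ v ≤ (N : ℝ) ^ 2 * M + N * σn2 := by
    have hvv : v ⬝ᵥ v = (N : ℝ) := by
      simp only [dotProduct]
      rw [Finset.sum_congr rfl fun i _ => hvsq i]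
      simp
    have hvKv' : v ⬝ᵥ K *ᵥ v ≤ (N : ℝ) ^ 2 * M := by
      have : v ⬝ᵥ K *ᵥ v = ∑ i, ∑ j, v i * (K i j * v j) := by
        simp only [dotProduct, Matrix.mulVec, Finset.mul_sum]
      rw [this]
      calc ∑ i, ∑ j, v i * (K i j * v j) ≤ ∑ i : Fin N, ∑ j : Fin N, M := by
            apply Finset.sum_le_sum; intro i _
            exact Finset.sum_le_sum fun j _ => hvKv i j
        _ = (N : ℝ) ^ 2 * M := by simp [Finset.sum_const]; ring
    have hexp : v ⬝ᵥ A *ᵥ v = v ⬝ᵥ K *ᵥ v + σn2 * (v ⬝ᵥ v) := by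
      simp only [hAdef, Matrix.add_mulVec, Matrix.smul_mulVec, Matrix.one_mulVec,
        dotProduct_add, dotProduct_smul, smul_eq_mul]
    rw [hexp, hvv]
    linarith
  -- lower bound on v ⬝ᵥ kN
  have hvkN : (N : ℝ) * Real.sqrt m ≤ v ⬝ᵥ kN := by
    have h1 : ∀ i, Real.sqrt m ≤ |kN i| := by
      intro i
      have : kN i = k (X i) x := hsymm x (X i)
      calc Real.sqrt m ≤ Real.sqrt (k (X i) x ^ 2) := Real.sqrt_le_sqrt (hm_le i)
        _ = |k (X i) x| := Real.sqrt_sq_eq_abs _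
        _ = |kN i| := by rw [this]
    calc (N : ℝ) * Real.sqrt m = ∑ _i : Fin N, Real.sqrt m := by
          simp [Finset.sum_const]
      _ ≤ ∑ i, |kN i| := Finset.sum_le_sum fun i _ => h1 i
      _ = v ⬝ᵥ kN := by
          simp only [dotProduct]
          exact Finset.sum_congr rfl fun i _ => (hvk i).symm
  have hvkN_sq : (N : ℝ) ^ 2 * m ≤ (v ⬝ᵥ kN) ^ 2 := by
    have hs : Real.sqrt m ^ 2 = m := Real.sq_sqrt hm0
    have hnn : (0 : ℝ) ≤ (N : ℝ) * Real.sqrt m := by positivity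
    nlinarith [hvkN, Real.sqrt_nonneg m]
  -- Cauchy–Schwarz
  set u : Fin N → ℝ := A⁻¹ *ᵥ kN with hudef
  have hdet : IsUnit A.det := isUnit_iff_ne_zero.mpr hA.det_pos.ne'
  have hAu : A *ᵥ u = kN := by
    rw [hudef, Matrix.mulVec_mulVec, Matrix.mul_nonsing_inv A hdet, Matrix.one_mulVec]
  have hcs : (v ⬝ᵥ kN) ^ 2 ≤ (v ⬝ᵥ A *ᵥ v) * S := by
    have h := cs_psd hA.posSemidef v u
    rw [hAu] at h
    have huAu : u ⬝ᵥ kN = S := by rw [hSdef, dotProduct_comm]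
    calc (v ⬝ᵥ kN) ^ 2 = (v ⬝ᵥ A *ᵥ u) ^ 2 := by rw [hAu]
      _ ≤ (v ⬝ᵥ A *ᵥ v) * (u ⬝ᵥ A *ᵥ u) := cs_psd hA.posSemidef v u
      _ = (v ⬝ᵥ A *ᵥ v) * S := by rw [hAu, huAu]
  -- combine
  have hM0 : 0 ≤ M := le_trans (hdiag ⟨0, hN⟩) (hM_ge ⟨0, hN⟩ ⟨0, hN⟩)
  have hN0 : (0 : ℝ) < N := by exact_mod_cast hN
  have hD : 0 < (N : ℝ) * M + σn2 := by positivity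
  have hvAv0 : 0 ≤ v ⬝ᵥ A *ᵥ v := by simpa using hA.posSemidef.dotProduct_mulVec_nonneg v
  have hchain : (N : ℝ) ^ 2 * m ≤ ((N : ℝ) ^ 2 * M + N * σn2) * S := by
    calc (N : ℝ) ^ 2 * m ≤ (v ⬝ᵥ kN) ^ 2 := hvkN_sq
      _ ≤ (v ⬝ᵥ A *ᵥ v) * S := hcs
      _ ≤ ((N : ℝ) ^ 2 * M + N * σn2) * S := mul_le_mul_of_nonneg_right hvAv hS0
  have hfinal : (N : ℝ) * m / ((N : ℝ) * M + σn2) ≤ S := by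
    rw [div_le_iff₀ hD]
    nlinarith [hchain]
  show k x x - S ≤ k x x - (N : ℝ) * m / ((N : ℝ) * M + σn2)
  linarith
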